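/- Let 𝔤 = 𝔤(𝔰, V, 𝔷, β) be the Spindler Lie algebra (bracket as above) where 𝔰 is semisimple, the 𝔰-module V satisfies span(𝔰.V) = V, z_{V}(𝔱_𝔰) = {0} for a Cartan subalgebra 𝔱_𝔰 of 𝔰 (no nonzero 𝔰-fixed vectors), and 𝔷 = span β(V, V). Let D be a derivation of 𝔤 with D({0} × {0} × 𝔰) = {0}. Then there exist D_V ∈ End_𝔰(V) and D_𝔷 ∈ End(𝔷) with D(v, z, x) = (D_V v, D_𝔷 z, 0) for all (v, z, x), and the pair (D_V, D_𝔷) satisfies D_𝔷 β(v,w) = β(D_V v, w) + β(v, D_V w). -/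

import Mathlib

attribute [local instance 100] LieRing.ofAssociativeRing

/-- The bracket of the Spindler Lie algebra `𝔤(𝔰, V, 𝔷, β)` on `V × 𝔷 × 𝔰`. -/
def spindlerBracket {s V Z : Type*} [LieRing s] [LieAlgebra ℝ s]
    [AddCommGroup V] [Module ℝ V] [AddCommGroup Z] [Module ℝ Z]
    (ρ : s →ₗ⁅ℝ⁆ Module.End ℝ V) (β : V →ₗ[ℝ] V →ₗ[ℝ] Z)
    (p q : V × Z × s) : V × Z × s :=
  (ρ p.2.2 q.1 - ρ q.2.2 p.1, β p.1 q.1, ⁅p.2.2, q.2.2⁆)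

/-- Let `𝔤 = 𝔤(𝔰, V, 𝔷, β)` with `𝔰` semisimple, `span(𝔰.V) = V`,
`z_V(𝔱_𝔰) = {0}` for a Cartan subalgebra `𝔱_𝔰 ⊆ 𝔰`, and `𝔷 = span β(V, V)`.  Every
derivation `D` of `𝔤` annihilating `{0} × {0} × 𝔰` is of the form
`D(v, z, x) = (D_V v, D_𝔷 z, 0)` with `D_V ∈ End_𝔰(V)` and `(D_V, D_𝔷)` β-compatible. -/
theorem spindler_derivation_annihilating_s_form
    (s V Z : Type*) [LieRing s] [LieAlgebra ℝ s] [LieAlgebra.IsSemisimple ℝ s]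
    [AddCommGroup V] [Module ℝ V] [AddCommGroup Z] [Module ℝ Z]
    (ρ : s →ₗ⁅ℝ⁆ Module.End ℝ V)
    (β : V →ₗ[ℝ] V →ₗ[ℝ] Z)
    (hβskew : ∀ v w : V, β v w = - β w v)
    (hβinv : ∀ (x : s) (v w : V), β (ρ x v) w + β v (ρ x w) = 0)
    (ts : LieSubalgebra ℝ s) [ts.IsCartanSubalgebra]
    (hfix : ∀ v : V, (∀ x ∈ ts, ρ x v = 0) → v = 0)
    (hVspan : Submodule.span ℝ {v : V | ∃ (x : s) (w : V), v = ρ x w} = ⊤)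
    (hZspan : Submodule.span ℝ {z : Z | ∃ v w : V, z = β v w} = ⊤)
    (D : (V × Z × s) →ₗ[ℝ] V × Z × s)
    (hD : ∀ p q : V × Z × s,
      D (spindlerBracket ρ β p q) =
        spindlerBracket ρ β (D p) q + spindlerBracket ρ β p (D q))
    (hann : ∀ x : s, D ((0 : V), (0 : Z), x) = 0) :
    ∃ (DV : V →ₗ[ℝ] V) (DZ : Z →ₗ[ℝ] Z),
      (∀ x : s, DV ∘ₗ ρ x = ρ x ∘ₗ DV) ∧
      (∀ (v : V) (z : Z) (x : s), D (v, z, x) = (DV v, DZ z, (0 : s))) ∧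
      (∀ v w : V, DZ (β v w) = β (DV v) w + β v (DV w)) := by
  classical
  set DV : V →ₗ[ℝ] V :=
    (LinearMap.fst ℝ V (Z × s)) ∘ₗ D ∘ₗ (LinearMap.inl ℝ V (Z × s)) with hDVdef
  set F : V →ₗ[ℝ] s :=
    ((LinearMap.snd ℝ Z s) ∘ₗ (LinearMap.snd ℝ V (Z × s))) ∘ₗ D ∘ₗ
      (LinearMap.inl ℝ V (Z × s)) with hFdef
  set G : V →ₗ[ℝ] Z :=
    ((LinearMap.fst ℝ Z s) ∘ₗ (LinearMap.snd ℝ V (Z × s))) ∘ₗ D ∘ₗ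
      (LinearMap.inl ℝ V (Z × s)) with hGdef
  set DZ : Z →ₗ[ℝ] Z :=
    ((LinearMap.fst ℝ Z s) ∘ₗ (LinearMap.snd ℝ V (Z × s))) ∘ₗ D ∘ₗ
      ((LinearMap.inr ℝ V (Z × s)) ∘ₗ (LinearMap.inl ℝ Z s)) with hDZdef
  have hDVval : ∀ v : V, DV v = (D (v, 0, 0)).1 := fun v => rfl
  have hFval : ∀ v : V, F v = (D (v, 0, 0)).2.2 := fun v => rfl
  have hGval : ∀ v : V, G v = (D (v, 0, 0)).2.1 := fun v => rfl
  have hDZval : ∀ z : Z, DZ z = (D (0, z, 0)).2.1 := fun z => rfl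
  -- `(0, z, 0)` brackets to zero with everything.
  have hzq : ∀ (z : Z) (q : V × Z × s),
      spindlerBracket ρ β ((0 : V), z, (0 : s)) q = 0 := by
    intro z q
    simp [spindlerBracket, Prod.ext_iff]
  -- Step A: D (0, z, 0) = (0, DZ z, 0).
  have hcent : ∀ z : Z, D (0, z, 0) = ((0 : V), DZ z, (0 : s)) := by
    intro z
    have hbr : ∀ q : V × Z × s, spindlerBracket ρ β (D (0, z, 0)) q = 0 := by
      intro q
      have h := hD ((0 : V), z, (0 : s)) q
      rw [hzq z q, hzq z (D q)] at h
      simpa using h.symm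
    have hy : ∀ y : s, (ρ y) (D (0, z, 0)).1 = 0 ∧ ⁅(D (0, z, 0)).2.2, y⁆ = 0 := by
      intro y
      have h := hbr ((0 : V), (0 : Z), y)
      simp only [spindlerBracket, Prod.ext_iff, Prod.fst_zero, Prod.snd_zero,
        map_zero, LinearMap.map_zero, zero_sub, neg_eq_zero, LinearMap.zero_apply] at h
      exact ⟨h.1, h.2.2⟩
    have h1 : (D (0, z, 0)).1 = 0 := hfix _ (fun x _ => (hy x).1)
    have h3 : (D (0, z, 0)).2.2 = 0 := by
      have hc : (D (0, z, 0)).2.2 ∈ LieAlgebra.center ℝ s := by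
        rw [LieModule.mem_maxTrivSubmodule]
        intro x
        rw [← neg_eq_zero, lie_skew]
        exact (hy x).2
      rw [LieAlgebra.center_eq_bot ℝ s] at hc
      simpa using hc
    exact Prod.ext h1 (Prod.ext (hDZval z).symm h3)
  -- Step B: equivariance relations from bracketing with s.
  have hB : ∀ (x : s) (w : V),
      DV ((ρ x) w) = (ρ x) (DV w) ∧ G ((ρ x) w) = 0 ∧ F ((ρ x) w) = ⁅x, F w⁆ := by
    intro x w
    have h := hD ((0 : V), (0 : Z), x) (w, 0, 0)
    rw [hann x] at h
    have hL : spindlerBracket ρ β ((0 : V), (0 : Z), x) (w, 0, 0)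
        = (((ρ x) w : V), (0 : Z), (0 : s)) := by
      simp [spindlerBracket]
    have h0 : spindlerBracket ρ β 0 (w, 0, 0) = 0 := by
      simp [spindlerBracket, Prod.ext_iff]
    rw [hL, h0, zero_add] at h
    have hR : spindlerBracket ρ β ((0 : V), (0 : Z), x) (D (w, 0, 0))
        = ((ρ x) (DV w), (0 : Z), ⁅x, F w⁆) := by
      simp [spindlerBracket, hDVval, hFval]
    rw [hR] at h
    rw [Prod.ext_iff, Prod.ext_iff] at h
    exact ⟨h.1, h.2.1, h.2.2⟩
  -- Step C: relations from bracketing V with V.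
  have hC : ∀ v w : V,
      (ρ (F v)) w = (ρ (F w)) v ∧ DZ (β v w) = β (DV v) w + β v (DV w) := by
    intro v w
    have h := hD (v, (0 : Z), (0 : s)) (w, (0 : Z), (0 : s))
    have hL : spindlerBracket ρ β (v, (0 : Z), (0 : s)) (w, 0, 0)
        = ((0 : V), β v w, (0 : s)) := by
      simp [spindlerBracket]
    rw [hL, hcent (β v w)] at h
    have hR : spindlerBracket ρ β (D (v, 0, 0)) (w, 0, 0) +
        spindlerBracket ρ β (v, (0 : Z), (0 : s)) (D (w, 0, 0))
        = ((ρ (F v)) w - (ρ (F w)) v, β (DV v) w + β v (DV w), (0 : s)) := by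
      simp [spindlerBracket, hDVval, hFval, Prod.ext_iff, sub_eq_add_neg]
    rw [hR] at h
    rw [Prod.ext_iff, Prod.ext_iff] at h
    exact ⟨sub_eq_zero.mp h.1.symm, h.2.1⟩
  -- Step D: F = 0, since its range is an abelian ideal.
  have hFzero : ∀ v : V, F v = 0 := by
    have hIdeal : ∀ (x : s) (m : s), m ∈ LinearMap.range F → ⁅x, m⁆ ∈ LinearMap.range F := by
      rintro x _ ⟨w, rfl⟩
      exact ⟨(ρ x) w, (hB x w).2.2⟩
    set I : LieIdeal ℝ s :=
      { LinearMap.range F with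
        lie_mem := fun {x m} hm => hIdeal x m hm } with hIdef
    have habelian : IsLieAbelian I := by
      constructor
      rintro ⟨-, v, rfl⟩ ⟨-, w, rfl⟩
      have h1 : ⁅F v, F w⁆ = F ((ρ (F v)) w) := ((hB (F v) w).2.2).symm
      have h2 : ⁅F w, F v⁆ = F ((ρ (F w)) v) := ((hB (F w) v).2.2).symm
      have h3 : ⁅F v, F w⁆ = ⁅F w, F v⁆ := by rw [h1, h2, (hC v w).1]
      have h4 : ⁅F v, F w⁆ = 0 := by
        have := h3.trans (lie_skew (F w) (F v)).symm
        have h5 : (2 : ℝ) • ⁅F v, F w⁆ = 0 := by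
          rw [two_smul]
          nth_rewrite 1 [this]
          exact neg_add_cancel _
        simpa using (smul_eq_zero.mp h5).resolve_left (by norm_num)
      ext
      exact h4
    have hIbot : I = ⊥ :=
      (LieAlgebra.hasTrivialRadical_iff_no_abelian_ideals ℝ s).mp inferInstance I habelian
    intro v
    have : F v ∈ I := ⟨v, rfl⟩
    rw [hIbot] at this
    simpa using this
  -- Step E: G = 0 on a spanning set, hence everywhere.
  have hGzero : ∀ v : V, G v = 0 := by
    have hker : Submodule.span ℝ {v : V | ∃ (x : s) (w : V), v = ρ x w}
        ≤ LinearMap.ker G := by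
      rw [Submodule.span_le]
      rintro _ ⟨x, w, rfl⟩
      exact (hB x w).2.1
    intro v
    have : v ∈ LinearMap.ker G := by
      apply hker
      rw [hVspan]
      trivial
    exact this
  -- Assemble.
  refine ⟨DV, DZ, ?_, ?_, ?_⟩
  · intro x
    ext w
    exact (hB x w).1
  · intro v z x
    have hsplit : ((v, z, x) : V × Z × s) = (v, 0, 0) + (0, z, 0) + (0, 0, x) := by
      simp [Prod.ext_iff]
    rw [hsplit, map_add, map_add, hann x, hcent z, add_zero]
    have hv : D (v, 0, 0) = ((DV v : V), (0 : Z), (0 : s)) := by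
      have := hGzero v
      have h2 := hFzero v
      rw [hGval] at this
      rw [hFval] at h2
      exact Prod.ext (hDVval v).symm (Prod.ext this h2)
    rw [hv]
    simp [Prod.ext_iff]
  · intro v w
    exact (hC v w).2
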